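/- Let Ω be a Cantor group, f ∈ C(Ω,ℝ), and p a positive integer. If there exist ω₀ ∈ Ω and a minimal translation T : Ω → Ω such that f(T^{p+m}(ω₀)) = f(T^m(ω₀)) for every m ∈ ℤ, then for every minimal translation T̃ : Ω → Ω, f is p-periodic with respect to T̃, i.e., f(T̃^p(ω)) = f(ω) for every ω ∈ Ω. -/

import Mathlib

/-- The translation `T(ω) = ω·a` is minimal: every `T`-orbit is dense. -/
def IsMinimalTranslation {Ω : Type*} [TopologicalSpace Ω] [CommGroup Ω] (a : Ω) : Prop :=
  ∀ ω : Ω, Dense (Set.range fun n : ℤ => ω * a ^ n)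

/-- `Ω` has no isolated points. -/
def NoIsolatedPoints (Ω : Type*) [TopologicalSpace Ω] : Prop :=
  ∀ ω : Ω, Filter.NeBot (nhdsWithin ω {ω}ᶜ)

/-- If `f` is invariant under right multiplication by `g`, it is invariant under all
integer powers of `g`. -/
theorem aux_zpow_inv {Ω : Type*} [CommGroup Ω] (f : Ω → ℝ) (g : Ω)
    (hg : ∀ ω : Ω, f (ω * g) = f ω) : ∀ k : ℤ, ∀ ω : Ω, f (ω * g ^ k) = f ω := by
  intro k
  induction k using Int.induction_on with
  | zero => simp
  | succ n ih =>
    intro ω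
    rw [zpow_add_one, ← mul_assoc, hg]
    exact ih ω
  | pred n ih =>
    intro ω
    have h1 := hg (ω * g ^ (-(n : ℤ) - 1))
    have h2 : ω * g ^ (-(n : ℤ) - 1) * g = ω * g ^ (-(n : ℤ)) := by
      rw [mul_assoc, ← zpow_add_one]
      norm_num
    rw [h2] at h1
    rw [← h1]
    exact ih ω

/-- Let `Ω` be a Cantor group, `f ∈ C(Ω,ℝ)` and `p` a positive integer.
If `f(T^{p+m}(ω₀)) = f(T^m(ω₀))` for some `ω₀ ∈ Ω`, some minimal translation `T` (by `a`) and
all `m ∈ ℤ`, then for every minimal translation `T̃` (by `b`), `f` is `p`-periodic with respect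
to `T̃`: `f(T̃^p(ω)) = f(ω)` for all `ω ∈ Ω`. -/
theorem statement_14 {Ω : Type*} [TopologicalSpace Ω] [CommGroup Ω] [IsTopologicalGroup Ω]
    [CompactSpace Ω] [TotallyDisconnectedSpace Ω] (hni : NoIsolatedPoints Ω)
    (f : C(Ω, ℝ)) (p : ℕ) (hp : 0 < p)
    (h : ∃ a : Ω, IsMinimalTranslation a ∧
      ∃ ω₀ : Ω, ∀ m : ℤ, f (ω₀ * a ^ ((p : ℤ) + m)) = f (ω₀ * a ^ m)) :
    ∀ b : Ω, IsMinimalTranslation b → ∀ ω : Ω, f (ω * b ^ (p : ℕ)) = f ω := by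
  obtain ⟨a, ha, ω₀, hf⟩ := h
  -- Step 1: f is invariant under multiplication by a^p.
  have step1 : ∀ ω : Ω, f (ω * a ^ (p : ℤ)) = f ω := by
    have hclosed : IsClosed {ω : Ω | f (ω * a ^ (p : ℤ)) = f ω} :=
      isClosed_eq (f.continuous.comp (continuous_mul_right _)) f.continuous
    have hsub : Set.range (fun n : ℤ => ω₀ * a ^ n) ⊆ {ω : Ω | f (ω * a ^ (p : ℤ)) = f ω} := by
      rintro _ ⟨m, rfl⟩
      simp only [Set.mem_setOf_eq, mul_assoc, ← zpow_add]
      rw [add_comm m]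
      exact hf m
    intro ω
    have h1 : closure (Set.range (fun n : ℤ => ω₀ * a ^ n)) ⊆
        {ω : Ω | f (ω * a ^ (p : ℤ)) = f ω} := hclosed.closure_subset_iff.mpr hsub
    exact h1 (by rw [(ha ω₀).closure_eq]; trivial)
  have zinv := aux_zpow_inv f (a ^ (p : ℤ)) step1
  -- The closed subgroup generated by a^p.
  set H : Subgroup Ω := (Subgroup.zpowers (a ^ (p : ℤ))).topologicalClosure with hH
  have haH : a ^ (p : ℤ) ∈ H := Subgroup.le_topologicalClosure _ (Subgroup.mem_zpowers _)
  have Hcl : IsClosed (H : Set Ω) := Subgroup.isClosed_topologicalClosure _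
  -- Step 2: f is invariant under H.
  have Hinv : ∀ g ∈ H, ∀ ω : Ω, f (ω * g) = f ω := by
    intro g hg ω
    have hclosed : IsClosed {x : Ω | f (ω * x) = f ω} :=
      isClosed_eq (f.continuous.comp (continuous_mul_left _)) continuous_const
    have hsub : ((Subgroup.zpowers (a ^ (p : ℤ)) : Subgroup Ω) : Set Ω) ⊆
        {x : Ω | f (ω * x) = f ω} := by
      rintro _ ⟨k, rfl⟩
      exact zinv k ω
    have h2 : closure ((Subgroup.zpowers (a ^ (p : ℤ)) : Subgroup Ω) : Set Ω) ⊆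
        {x : Ω | f (ω * x) = f ω} := hclosed.closure_subset_iff.mpr hsub
    exact h2 hg
  -- Step 3: every b lies in some coset a^j * H with j < p.
  intro b hb ω
  have hbU : b ∈ ⋃ j : Fin p, (fun x => a ^ ((j : ℕ) : ℤ) * x) '' (H : Set Ω) := by
    have hUcl : IsClosed (⋃ j : Fin p, (fun x => a ^ ((j : ℕ) : ℤ) * x) '' (H : Set Ω)) :=
      isClosed_iUnion_of_finite fun j =>
        (Homeomorph.mulLeft (a ^ ((j : ℕ) : ℤ))).isClosedMap _ Hcl
    have hsub : Set.range (fun n : ℤ => (1 : Ω) * a ^ n) ⊆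
        ⋃ j : Fin p, (fun x => a ^ ((j : ℕ) : ℤ) * x) '' (H : Set Ω) := by
      rintro _ ⟨n, rfl⟩
      have hp' : (0 : ℤ) < (p : ℤ) := by exact_mod_cast hp
      have hr0 : 0 ≤ n % (p : ℤ) := Int.emod_nonneg n (by positivity)
      have hrp : n % (p : ℤ) < (p : ℤ) := Int.emod_lt_of_pos n hp'
      refine Set.mem_iUnion.mpr ⟨⟨(n % (p : ℤ)).toNat, ?_⟩, ?_⟩
      · omega
      refine ⟨(a ^ (p : ℤ)) ^ (n / (p : ℤ)), Subgroup.zpow_mem _ haH _, ?_⟩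
      have hcast : (((n % (p : ℤ)).toNat : ℕ) : ℤ) = n % (p : ℤ) := Int.toNat_of_nonneg hr0
      simp only [hcast]
      rw [← zpow_mul, ← zpow_add, one_mul]
      exact congrArg (a ^ ·) (Int.emod_add_mul_ediv n (p : ℤ))
    exact (hUcl.closure_subset_iff.mpr hsub) (by rw [(ha 1).closure_eq]; trivial)
  obtain ⟨s, ⟨j, rfl⟩, g, hgH, hbe⟩ := hbU
  -- b = a^j * g, so b^p ∈ H.
  have hbp : b ^ (p : ℕ) ∈ H := by
    rw [← hbe, mul_pow]
    refine Subgroup.mul_mem _ ?_ (Subgroup.pow_mem _ hgH p)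
    have : (a ^ ((j : ℕ) : ℤ)) ^ (p : ℕ) = (a ^ (p : ℤ)) ^ ((j : ℕ) : ℤ) := by
      rw [← zpow_natCast (a ^ ((j : ℕ) : ℤ)) p, ← zpow_mul, mul_comm, zpow_mul]
    rw [this]
    exact Subgroup.zpow_mem _ haH _
  exact Hinv _ hbp ω
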